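/- arXiv:2107.03333 — 2 statements merged into one kernel-verified Lean document; each statement's English description precedes it below -/
import Mathlib

section
/- Let f: ℝᵐ → ℝ be twice differentiable with ∇²f(x) ≤ U·I for all x, let c ≥ 10, and suppose z ∈ ℝᵐ satisfies ‖z - ∇f(μ)‖₂ ≤ (4c)⁻¹‖∇f(μ)‖₂. Then f(μ - z/(cU)) ≤ f(μ) - (9/(10cU))‖∇f(μ)‖₂². -/
open InnerProductSpace

lemma taylor_bd {m : ℕ} (f : EuclideanSpace ℝ (Fin m) → ℝ) (hf : ContDiff ℝ 2 f)
    (U : ℝ)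
    (hHess : ∀ x v, iteratedFDeriv ℝ 2 f x ![v, v] ≤ U * ‖v‖ ^ 2)
    (x v : EuclideanSpace ℝ (Fin m)) :
    f (x + v) ≤ f x + fderiv ℝ f x v + U / 2 * ‖v‖ ^ 2 := by
  set C := U * ‖v‖ ^ 2 with hC
  set L : ℝ → EuclideanSpace ℝ (Fin m) := fun t => x + t • v with hL
  have hLd : ∀ t : ℝ, HasDerivAt L v t := by
    intro t
    simpa [hL] using ((hasDerivAt_id t).smul_const v).const_add x
  have hfd : Differentiable ℝ f := hf.differentiable (by norm_num)
  have hf' : ContDiff ℝ 1 (fderiv ℝ f) := hf.fderiv_right (m := 1) (by norm_num)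
  have hfd' : Differentiable ℝ (fderiv ℝ f) := hf'.differentiable one_ne_zero
  -- φ and its derivative ψ
  set ψ : ℝ → ℝ := fun t => fderiv ℝ f (L t) v with hψ
  have hφd : ∀ t : ℝ, HasDerivAt (fun s => f (L s)) (ψ t) t := fun t =>
    (hfd (L t)).hasFDerivAt.comp_hasDerivAt t (hLd t)
  -- ψ and its derivative χ
  set χ : ℝ → ℝ := fun t => fderiv ℝ (fderiv ℝ f) (L t) v v with hχ
  have hψd : ∀ t : ℝ, HasDerivAt ψ (χ t) t := by
    intro t
    have h1 : HasDerivAt (fun s => fderiv ℝ f (L s)) (fderiv ℝ (fderiv ℝ f) (L t) v) t :=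
      (hfd' (L t)).hasFDerivAt.comp_hasDerivAt t (hLd t)
    simpa using h1.clm_apply (hasDerivAt_const t v)
  have hχle : ∀ t : ℝ, χ t ≤ C := by
    intro t
    have := hHess (L t) v
    rwa [iteratedFDeriv_two_apply, Matrix.cons_val_zero, Matrix.cons_val_one, Matrix.cons_val_zero]
      at this
  -- step 1: ψ t ≤ ψ 0 + C * t on [0,1]
  have step1 : ∀ t ∈ Set.Icc (0:ℝ) 1, ψ t ≤ ψ 0 + C * t := by
    have hanti : AntitoneOn (fun t => ψ t - C * t) (Set.Icc 0 1) := by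
      apply antitoneOn_of_deriv_nonpos (convex_Icc 0 1)
      · exact (Continuous.continuousOn (by
          fun_prop (disch := simp [hψ]))).sub (continuous_const.mul continuous_id).continuousOn
      · intro t ht
        have h : HasDerivAt (fun t => ψ t - C * t) (χ t - C) t :=
          (hψd t).sub (by simpa using (hasDerivAt_id t).const_mul C)
        exact h.differentiableAt.differentiableWithinAt
      · intro t ht
        have h : HasDerivAt (fun t => ψ t - C * t) (χ t - C) t :=
          (hψd t).sub (by simpa using (hasDerivAt_id t).const_mul C)
        rw [h.deriv]
        linarith [hχle t]
    intro t ht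
    have := hanti (Set.left_mem_Icc.mpr one_pos.le) ht ht.1
    simp only [mul_zero, sub_zero] at this
    linarith
  -- step 2
  have hanti2 : AntitoneOn (fun t => f (L t) - ψ 0 * t - C * t ^ 2 / 2) (Set.Icc 0 1) := by
    apply antitoneOn_of_deriv_nonpos (convex_Icc 0 1)
    · apply Continuous.continuousOn
      have : Continuous fun t => f (L t) := hf.continuous.comp (by fun_prop)
      fun_prop
    · intro t ht
      have h : HasDerivAt (fun t => f (L t) - ψ 0 * t - C * t ^ 2 / 2)
          (ψ t - ψ 0 - C * (2 * t) / 2) t :=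
        ((hφd t).sub (by simpa using (hasDerivAt_id t).const_mul (ψ 0))).sub
          (by simpa using ((hasDerivAt_pow 2 t).const_mul C).div_const 2)
      exact h.differentiableAt.differentiableWithinAt
    · intro t ht
      have h : HasDerivAt (fun t => f (L t) - ψ 0 * t - C * t ^ 2 / 2)
          (ψ t - ψ 0 - C * (2 * t) / 2) t :=
        ((hφd t).sub (by simpa using (hasDerivAt_id t).const_mul (ψ 0))).sub
          (by simpa using ((hasDerivAt_pow 2 t).const_mul C).div_const 2)
      rw [h.deriv]
      have ht' : t ∈ Set.Icc (0:ℝ) 1 := interior_subset ht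
      have := step1 t ht'
      linarith
  have key := hanti2 (Set.left_mem_Icc.mpr one_pos.le) (Set.right_mem_Icc.mpr one_pos.le)
    zero_le_one
  simp only [mul_zero, mul_one, sub_zero, one_pow, zero_pow, hL] at key
  simp only [zero_smul, add_zero, one_smul] at key
  have hψ0 : ψ 0 = fderiv ℝ f x v := by simp [hψ, hL]
  rw [hψ0] at key
  linarith

lemma scalar_key (x G Z a : ℝ) (hx0 : 0 < x) (hx : x ≤ 1/40) (hG : 0 ≤ G)
    (hip : (1 - x) * G ^ 2 ≤ a) (hzsq : Z ^ 2 ≤ (1 + x) ^ 2 * G ^ 2) :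
    9 / 10 * G ^ 2 ≤ a - 2 * x * Z ^ 2 := by
  have hub : 2 * x * Z ^ 2 ≤ 2 * x * ((1 + x) ^ 2 * G ^ 2) :=
    mul_le_mul_of_nonneg_left hzsq (by positivity)
  have hpoly : 3 * x + 4 * x ^ 2 + 2 * x ^ 3 ≤ 1 / 10 := by nlinarith
  nlinarith [mul_nonneg (by linarith : (0:ℝ) ≤ 1/10 - (3*x + 4*x^2 + 2*x^3)) (sq_nonneg G)]



/-- approximate gradient descent progress. If `∇²f ≤ U·I`
everywhere, `c ≥ 10`, and `z` approximates `∇f(μ)` with relative error `(4c)⁻¹`,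
then the step `μ - z/(cU)` decreases `f` by at least `(9/(10cU))‖∇f(μ)‖₂²`. -/
theorem approx_gradient_descent_progress {m : ℕ}
    (f : EuclideanSpace ℝ (Fin m) → ℝ) (hf : ContDiff ℝ 2 f)
    (U : ℝ) (hU : 0 < U)
    (hHess : ∀ x v, iteratedFDeriv ℝ 2 f x ![v, v] ≤ U * ‖v‖ ^ 2)
    (c : ℝ) (hc : 10 ≤ c)
    (mu z : EuclideanSpace ℝ (Fin m))
    (hz : ‖z - gradient f mu‖ ≤ (4 * c)⁻¹ * ‖gradient f mu‖) :
    f (mu - (c * U)⁻¹ • z) ≤ f mu - (9 / (10 * c * U)) * ‖gradient f mu‖ ^ 2 := by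
  have hc0 : (0:ℝ) < c := by linarith
  have hcU : (0:ℝ) < c * U := mul_pos hc0 hU
  set g := gradient f mu with hg
  set v : EuclideanSpace ℝ (Fin m) := -((c * U)⁻¹ • z) with hv
  have hpt : mu - (c * U)⁻¹ • z = mu + v := by rw [hv]; abel
  have htay := taylor_bd f hf U hHess mu v
  -- fderiv in terms of gradient
  have hfg : ∀ w : EuclideanSpace ℝ (Fin m), fderiv ℝ f mu w = inner ℝ g w := by
    intro w
    rw [hg, gradient]
    exact (InnerProductSpace.toDual_symm_apply).symm
  have hfv : fderiv ℝ f mu v = -((c * U)⁻¹ * inner ℝ g z) := by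
    rw [hfg, hv, inner_neg_right, inner_smul_right]
  have hnv : ‖v‖ ^ 2 = ((c * U)⁻¹) ^ 2 * ‖z‖ ^ 2 := by
    rw [hv, norm_neg, norm_smul, mul_pow]
    congr 1
    rw [Real.norm_eq_abs, sq_abs]
  rw [hpt]
  rw [hfv, hnv] at htay
  -- inner product lower bound
  have hip : (1 - (4 * c)⁻¹) * ‖g‖ ^ 2 ≤ inner ℝ g z := by
    have h1 : inner ℝ g z = ‖g‖ ^ 2 + inner ℝ g (z - g) := by
      rw [inner_sub_right, real_inner_self_eq_norm_sq]; ring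
    have h2 : |inner ℝ g (z - g)| ≤ ‖g‖ * ((4 * c)⁻¹ * ‖g‖) := by
      calc |inner ℝ g (z - g)| ≤ ‖g‖ * ‖z - g‖ := abs_real_inner_le_norm g (z - g)
        _ ≤ ‖g‖ * ((4 * c)⁻¹ * ‖g‖) := by
            exact mul_le_mul_of_nonneg_left hz (norm_nonneg g)
    have := abs_le.mp h2
    nlinarith [this.1]
  have hzn : ‖z‖ ≤ (1 + (4 * c)⁻¹) * ‖g‖ := by
    calc ‖z‖ = ‖(z - g) + g‖ := by rw [sub_add_cancel]
      _ ≤ ‖z - g‖ + ‖g‖ := norm_add_le _ _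
      _ ≤ (4 * c)⁻¹ * ‖g‖ + ‖g‖ := by linarith
      _ = (1 + (4 * c)⁻¹) * ‖g‖ := by ring
  -- scalar inequality
  have hG : (0:ℝ) ≤ ‖g‖ := norm_nonneg g
  have hZ : (0:ℝ) ≤ ‖z‖ := norm_nonneg z
  have hzsq : ‖z‖ ^ 2 ≤ (1 + (4 * c)⁻¹) ^ 2 * ‖g‖ ^ 2 := by
    nlinarith [hzn, hG, hZ]
  have key : 9 / 10 * ‖g‖ ^ 2 ≤ inner ℝ g z - (2 * c)⁻¹ * ‖z‖ ^ 2 := by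
    have h4c : (4 * c)⁻¹ ≤ 1 / 40 := by
      rw [inv_le_comm₀ (by linarith) (by norm_num)]; linarith
    have h4c0 : (0:ℝ) < (4 * c)⁻¹ := by positivity
    have hrel : (2 * c)⁻¹ = 2 * (4 * c)⁻¹ := by field_simp; ring
    rw [hrel]
    exact scalar_key ((4 * c)⁻¹) ‖g‖ ‖z‖ (inner ℝ g z) h4c0 h4c hG hip hzsq
  -- combine
  have hfinal : f mu + -((c * U)⁻¹ * inner ℝ g z) + U / 2 * (((c * U)⁻¹) ^ 2 * ‖z‖ ^ 2)
      ≤ f mu - 9 / (10 * c * U) * ‖g‖ ^ 2 := by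
    have hid : U / 2 * (((c * U)⁻¹) ^ 2 * ‖z‖ ^ 2) = (c * U)⁻¹ * ((2 * c)⁻¹ * ‖z‖ ^ 2) := by
      field_simp
    have hid2 : (9:ℝ) / (10 * c * U) = (c * U)⁻¹ * (9 / 10) := by
      field_simp
    rw [hid, hid2]
    have h := mul_le_mul_of_nonneg_left key (le_of_lt (inv_pos.mpr hcU))
    ring_nf at h ⊢
    linarith
  linarith
end

section
/- Let f: ℝᵐ → ℝ be twice differentiable with L·I ≤ ∇²f(x) ≤ U·I for all x (0 < L ≤ U), with minimizer λ. Suppose z satisfies ‖z - ∇f(μ)‖₂ ≤ (4c)⁻¹‖∇f(μ)‖₂ for some c ≥ 10. Then f(μ - z/(cU)) - f(λ) ≤ (1 - 18L/(10cU)) (f(μ) - f(λ)). -/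
set_option maxHeartbeats 1000000

open intervalIntegral in
lemma taylor_ub {F : Type*} [NormedAddCommGroup F] [NormedSpace ℝ F]
    (f : F → ℝ) (hf : ContDiff ℝ 2 f) (U : ℝ)
    (hH : ∀ x v, iteratedFDeriv ℝ 2 f x ![v, v] ≤ U * ‖v‖ ^ 2) (x v : F) :
    f (x + v) ≤ f x + fderiv ℝ f x v + U / 2 * ‖v‖ ^ 2 := by
  set ℓ : ℝ → F := fun t => x + t • v with hℓ
  have hℓd : ∀ t : ℝ, HasDerivAt ℓ v t := fun t => by
    have h := ((hasDerivAt_id t).smul_const v).const_add x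
    simp only [one_smul] at h
    exact h
  have hfd : Differentiable ℝ f := hf.differentiable (by norm_num)
  have hfd' : Differentiable ℝ (fderiv ℝ f) :=
    (hf.fderiv_right (m := 1) (by norm_num)).differentiable (by norm_num)
  set g1 : ℝ → ℝ := fun t => fderiv ℝ f (ℓ t) v with hg1
  set g2 : ℝ → ℝ := fun t => fderiv ℝ (fderiv ℝ f) (ℓ t) v v with hg2
  have hd1 : ∀ t : ℝ, HasDerivAt (fun t => f (ℓ t)) (g1 t) t := fun t =>
    (hfd (ℓ t)).hasFDerivAt.comp_hasDerivAt t (hℓd t)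
  have hd2 : ∀ t : ℝ, HasDerivAt g1 (g2 t) t := fun t => by
    have h1 : HasFDerivAt (fun y => fderiv ℝ f y v)
        ((ContinuousLinearMap.apply ℝ ℝ v).comp (fderiv ℝ (fderiv ℝ f) (ℓ t))) (ℓ t) :=
      (ContinuousLinearMap.apply ℝ ℝ v).hasFDerivAt.comp _ (hfd' (ℓ t)).hasFDerivAt
    exact h1.comp_hasDerivAt t (hℓd t)
  have hcℓ : Continuous ℓ := by fun_prop
  have hc1 : Continuous g1 :=
    ((hf.continuous_fderiv (by norm_num)).comp hcℓ).clm_apply continuous_const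
  have hc2 : Continuous g2 :=
    ((((hf.fderiv_right (m := 1) (by norm_num)).continuous_fderiv
      (by norm_num)).comp hcℓ).clm_apply continuous_const).clm_apply continuous_const
  have key2 : ∀ t ∈ Set.Icc (0:ℝ) 1, g1 t ≤ g1 0 + U * ‖v‖ ^ 2 * t := by
    intro t ht
    have hft : g1 t - g1 0 = ∫ s in (0:ℝ)..t, g2 s :=
      (integral_eq_sub_of_hasDerivAt (fun s _ => hd2 s)
        (hc2.intervalIntegrable 0 t)).symm
    have hb : (∫ s in (0:ℝ)..t, g2 s) ≤ ∫ s in (0:ℝ)..t, U * ‖v‖ ^ 2 := by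
      apply integral_mono_on ht.1 (hc2.intervalIntegrable 0 t)
        (intervalIntegrable_const)
      intro s _
      have := hH (ℓ s) v
      rwa [iteratedFDeriv_two_apply] at this
    simp only [intervalIntegral.integral_const, smul_eq_mul] at hb
    nlinarith [hb, hft]
  have hft : f (ℓ 1) - f (ℓ 0) = ∫ t in (0:ℝ)..1, g1 t :=
    (integral_eq_sub_of_hasDerivAt (fun t _ => hd1 t)
      (hc1.intervalIntegrable 0 1)).symm
  have hint : IntervalIntegrable (fun t : ℝ => g1 0 + U * ‖v‖ ^ 2 * t)
      MeasureTheory.volume 0 1 :=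
    Continuous.intervalIntegrable (by fun_prop) 0 1
  have hb : (∫ t in (0:ℝ)..1, g1 t) ≤ ∫ t in (0:ℝ)..1, (g1 0 + U * ‖v‖ ^ 2 * t) :=
    integral_mono_on zero_le_one (hc1.intervalIntegrable 0 1) hint key2
  have hval : (∫ t in (0:ℝ)..1, (g1 0 + U * ‖v‖ ^ 2 * t)) = g1 0 + U / 2 * ‖v‖ ^ 2 := by
    rw [intervalIntegral.integral_add intervalIntegrable_const
      (Continuous.intervalIntegrable (by fun_prop) 0 1),
      intervalIntegral.integral_const, integral_const_mul, integral_id]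
    simp only [smul_eq_mul]
    ring
  have hℓ0 : ℓ 0 = x := by simp [hℓ]
  have hℓ1 : ℓ 1 = x + v := by simp [hℓ]
  have hg10 : g1 0 = fderiv ℝ f x v := by simp [hg1, hℓ0]
  rw [hℓ0, hℓ1] at hft
  rw [← hg10]
  linarith [hft, hb, hval.le, hval.ge]

lemma taylor_lb {F : Type*} [NormedAddCommGroup F] [NormedSpace ℝ F]
    (f : F → ℝ) (hf : ContDiff ℝ 2 f) (L : ℝ)
    (hH : ∀ x v, L * ‖v‖ ^ 2 ≤ iteratedFDeriv ℝ 2 f x ![v, v]) (x v : F) :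
    f x + fderiv ℝ f x v + L / 2 * ‖v‖ ^ 2 ≤ f (x + v) := by
  have h := taylor_ub (fun y => -f y) hf.neg (-L)
    (fun x v => by
      have := hH x v
      rw [show (fun y => -f y) = -f from rfl, iteratedFDeriv_neg_apply]
      simp only [ContinuousMultilinearMap.neg_apply]
      linarith) x v
  have hd : fderiv ℝ (fun y => -f y) x = -fderiv ℝ f x := fderiv_neg
  rw [hd] at h
  simp only [ContinuousLinearMap.neg_apply] at h
  linarith

open scoped RealInnerProductSpace

/-- exponential convergence of approximate gradient descent. If
`L·I ≤ ∇²f ≤ U·I` (`0 < L ≤ U`), `λ` minimizes `f`, `c ≥ 10`, and `z` approximates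
`∇f(μ)` with relative error `(4c)⁻¹`, then
`f(μ - z/(cU)) - f(λ) ≤ (1 - 18L/(10cU)) (f(μ) - f(λ))`. -/
theorem approx_gradient_descent_contraction {m : ℕ}
    (f : EuclideanSpace ℝ (Fin m) → ℝ) (hf : ContDiff ℝ 2 f)
    (L U : ℝ) (hL : 0 < L) (hLU : L ≤ U)
    (hHess : ∀ x v, L * ‖v‖ ^ 2 ≤ iteratedFDeriv ℝ 2 f x ![v, v] ∧
      iteratedFDeriv ℝ 2 f x ![v, v] ≤ U * ‖v‖ ^ 2)
    (lam : EuclideanSpace ℝ (Fin m)) (hmin : ∀ x, f lam ≤ f x)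
    (c : ℝ) (hc : 10 ≤ c)
    (mu z : EuclideanSpace ℝ (Fin m))
    (hz : ‖z - gradient f mu‖ ≤ (4 * c)⁻¹ * ‖gradient f mu‖) :
    f (mu - (c * U)⁻¹ • z) - f lam ≤ (1 - 18 * L / (10 * c * U)) * (f mu - f lam) := by
  have hU : (0:ℝ) < U := hL.trans_le hLU
  have hc0 : (0:ℝ) < c := by linarith
  have hgrad : ∀ x v, ⟪gradient f x, v⟫ = fderiv ℝ f x v := fun x v =>
    InnerProductSpace.toDual_symm_apply
  set g := gradient f mu with hg
  set G := ‖g‖ with hG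
  set D := ‖z - g‖ with hD
  -- strong convexity bound : f mu - f lam ≤ G^2/(2L)
  have hsc : f mu - f lam ≤ G ^ 2 / (2 * L) := by
    set w := lam - mu with hw
    have h1 := taylor_lb f hf L (fun x v => (hHess x v).1) mu w
    have h2 : mu + w = lam := by rw [hw]; abel
    rw [h2, ← hgrad, ← hg] at h1
    have h0 : (0:ℝ) ≤ ‖g + L • w‖ ^ 2 := by positivity
    rw [norm_add_sq_real, real_inner_smul_right, norm_smul, Real.norm_eq_abs,
      abs_of_pos hL, mul_pow] at h0
    rw [le_div_iff₀ (by positivity)]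
    have h3 := mul_le_mul_of_nonneg_left h1 (by positivity : (0:ℝ) ≤ 2 * L)
    nlinarith [h0, h3]
  have hABnn : (0:ℝ) ≤ f mu - f lam := by linarith [hmin mu]
  -- descent step
  set s : ℝ := (c * U)⁻¹ with hs
  have hs0 : 0 < s := by positivity
  set q : ℝ := (4 * c)⁻¹ with hq
  have hq0 : 0 < q := by positivity
  have hq40 : q ≤ 1 / 40 := by
    rw [hq, inv_le_comm₀ (by positivity) (by norm_num)]
    linarith
  set v : EuclideanSpace ℝ (Fin m) := (-s) • z with hv
  have hmv : mu - (c * U)⁻¹ • z = mu + v := by rw [hv, neg_smul, ← hs]; abel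
  have hub := taylor_ub f hf U (fun x v => (hHess x v).2) mu v
  rw [← hgrad] at hub
  have hiv : ⟪g, v⟫ = -s * ⟪g, z⟫ := by rw [hv, real_inner_smul_right]
  have hnv : ‖v‖ = s * ‖z‖ := by
    rw [hv, norm_smul, Real.norm_eq_abs, abs_neg, abs_of_pos hs0]
  rw [hiv, hnv] at hub
  -- inner product bound
  have hI : G ^ 2 - G * D ≤ ⟪g, z⟫ := by
    have h1 : ⟪g, z⟫ = ⟪g, g⟫ + ⟪g, z - g⟫ := by
      rw [← inner_add_right]; congr 1; abel
    have h2 : -(G * D) ≤ ⟪g, z - g⟫ :=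
      neg_le_of_abs_le (abs_real_inner_le_norm g (z - g))
    rw [h1, real_inner_self_eq_norm_sq] at *
    linarith
  have hZ : ‖z‖ ≤ G + D := by
    calc ‖z‖ = ‖(z - g) + g‖ := by congr 1; abel
    _ ≤ D + G := norm_add_le _ _
    _ = G + D := by ring
  have hDq : D ≤ q * G := hz
  have hGnn : (0:ℝ) ≤ G := norm_nonneg _
  have hZ2 : ‖z‖ ^ 2 ≤ (1 + q) ^ 2 * G ^ 2 := by nlinarith [norm_nonneg z]
  -- rewrite U/2 * (s‖z‖)^2 = 2*q*s*‖z‖^2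
  have hcoef : U / 2 * (s * ‖z‖) ^ 2 = 2 * q * s * ‖z‖ ^ 2 := by
    rw [hs, hq]; field_simp; ring
  have hK : (9:ℝ)/10 ≤ 1 - q - 2*q*(1+q)^2 := by nlinarith
  have hstep : f (mu + v) ≤ f mu - s * (9/10) * G ^ 2 := by
    have e1 : s * (G^2 - G*D) ≤ s * ⟪g, z⟫ := mul_le_mul_of_nonneg_left hI hs0.le
    have e2 : 2*q*s*‖z‖^2 ≤ 2*q*s*((1+q)^2*G^2) :=
      mul_le_mul_of_nonneg_left hZ2 (by positivity)
    have e3 : (9:ℝ)/10 * (s * G^2) ≤ (1 - q - 2*q*(1+q)^2) * (s * G^2) :=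
      mul_le_mul_of_nonneg_right hK (by positivity)
    have e4 : s * (G * D) ≤ s * (q * G * G) := by
      apply mul_le_mul_of_nonneg_left _ hs0.le
      nlinarith
    nlinarith [hub, hcoef, e1, e2, e3, e4]
  have hG2 : 2 * L * (f mu - f lam) ≤ G ^ 2 := by
    have := (le_div_iff₀ (by positivity : (0:ℝ) < 2 * L)).mp hsc
    linarith
  have hfinal : 18 * L / (10 * c * U) = 9/5 * L * s := by
    rw [hs]; field_simp; ring
  rw [hmv, hfinal]
  have e5 : 9/10 * s * (2 * L * (f mu - f lam)) ≤ 9/10 * s * G ^ 2 :=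
    mul_le_mul_of_nonneg_left hG2 (by positivity)
  nlinarith [hstep, e5]
end
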